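/- Let d > 1, R > 0, w ∈ ℝᵈ, and fix (x, y) ∈ ℝᵈ × ℝ with ∇_w f(w; (x,y)) ≠ 0 where f(w; (x,y)) = (1/2)(xᵀw − y)². Define S_ε = {(z,t) : ‖∇_w f(w; (x,y)) − ∇_w f(w; (z,t))‖ ≤ ε}. Then the Lebesgue measure of S_ε intersected with the set {(z,t) : ‖z‖ < R} restricted in t per the forging condition satisfies μ(S_ε ∩ B_R) ≤ (2d/(d−1))·(vol(B_R)/R)·ε, where B_R is the open ball of radius R in ℝᵈ and vol(B_R) its d-dimensional volume. -/

import Mathlib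

open scoped RealInnerProductSpace
open MeasureTheory

open Set in
/-- Auxiliary: radial integral of `‖z‖⁻¹` over the ball of radius `R`. -/
lemma radial_bound {d : ℕ} (hd : 1 < d) {R : ℝ} (hR : 0 < R) :
    ∫⁻ z in Metric.ball (0 : EuclideanSpace ℝ (Fin d)) R, ENNReal.ofReal ‖z‖⁻¹ ≤
      ENNReal.ofReal (d / (d - 1) * R ^ (d - 1)) *
        volume (Metric.ball (0 : EuclideanSpace ℝ (Fin d)) 1) := by
  haveI : Nonempty (Fin d) := ⟨⟨0, by omega⟩⟩
  set V1 := volume (Metric.ball (0 : EuclideanSpace ℝ (Fin d)) 1) with hV1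
  have hd1 : (0:ℝ) < (d:ℝ) - 1 := by
    have : (2:ℝ) ≤ d := by exact_mod_cast hd
    linarith
  rw [lintegral_eq_lintegral_meas_le _
    (Filter.Eventually.of_forall fun z => inv_nonneg.2 (norm_nonneg z))
    (measurable_norm.inv.aemeasurable)]
  have key : ∀ t ∈ Ioi (0:ℝ),
      (volume.restrict (Metric.ball (0 : EuclideanSpace ℝ (Fin d)) R))
        {z | t ≤ ‖z‖⁻¹} ≤ ENNReal.ofReal (min R t⁻¹ ^ d) * V1 := by
    intro t ht
    have htpos : (0:ℝ) < t := ht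
    have hmin : 0 ≤ min R t⁻¹ := le_min hR.le (inv_nonneg.2 htpos.le)
    calc (volume.restrict (Metric.ball (0 : EuclideanSpace ℝ (Fin d)) R)) {z | t ≤ ‖z‖⁻¹}
        ≤ volume (Metric.closedBall (0 : EuclideanSpace ℝ (Fin d)) (min R t⁻¹)) := by
          rw [Measure.restrict_apply' measurableSet_ball]
          refine measure_mono fun z hz => ?_
          obtain ⟨h1, h2⟩ := hz
          rw [mem_setOf_eq] at h1
          rw [Metric.mem_ball, dist_zero_right] at h2
          have hz0 : z ≠ 0 := by
            rintro rfl
            rw [norm_zero, inv_zero] at h1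
            linarith
          have hzn : 0 < ‖z‖ := norm_pos_iff.2 hz0
          have h3 : ‖z‖ ≤ t⁻¹ := by
            rw [← inv_inv ‖z‖]
            exact inv_anti₀ htpos h1
          rw [Metric.mem_closedBall, dist_zero_right]
          exact le_min h2.le h3
      _ = ENNReal.ofReal (min R t⁻¹ ^ d) * V1 := by
          rw [Measure.addHaar_closedBall _ _ hmin, finrank_euclideanSpace_fin]
  calc ∫⁻ t in Ioi (0:ℝ),
        (volume.restrict (Metric.ball (0 : EuclideanSpace ℝ (Fin d)) R)) {z | t ≤ ‖z‖⁻¹}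
      ≤ ∫⁻ t in Ioi (0:ℝ), ENNReal.ofReal (min R t⁻¹ ^ d) * V1 :=
        setLIntegral_mono' measurableSet_Ioi key
    _ = (∫⁻ t in Ioc (0:ℝ) R⁻¹, ENNReal.ofReal (min R t⁻¹ ^ d) * V1)
        + ∫⁻ t in Ioi R⁻¹, ENNReal.ofReal (min R t⁻¹ ^ d) * V1 := by
        rw [← lintegral_union measurableSet_Ioi (Ioc_disjoint_Ioi le_rfl),
          Ioc_union_Ioi_eq_Ioi (inv_nonneg.2 hR.le)]
    _ ≤ ENNReal.ofReal (R ^ (d-1)) * V1 + ENNReal.ofReal (R ^ (d-1) / ((d:ℝ) - 1)) * V1 := by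
        gcongr ?_ + ?_
        · have : ∀ t ∈ Ioc (0:ℝ) R⁻¹, ENNReal.ofReal (min R t⁻¹ ^ d) * V1
              = ENNReal.ofReal (R ^ d) * V1 := by
            intro t ⟨ht0, ht1⟩
            rw [min_eq_left ((le_inv_comm₀ hR ht0).2 ht1)]
          rw [setLIntegral_congr_fun measurableSet_Ioc
            this, lintegral_const,
            Measure.restrict_apply MeasurableSet.univ, univ_inter, Real.volume_Ioc]
          rw [mul_right_comm]
          gcongr
          rw [← ENNReal.ofReal_mul (by positivity), sub_zero]
          apply le_of_eq
          congr 1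
          rw [← pow_sub_one_mul (by omega : d ≠ 0) R, mul_assoc,
            mul_inv_cancel₀ hR.ne', mul_one]
        · have : ∀ t ∈ Ioi R⁻¹, ENNReal.ofReal (min R t⁻¹ ^ d) * V1
              = ENNReal.ofReal (t ^ (-(d:ℝ))) * V1 := by
            intro t ht
            rw [mem_Ioi] at ht
            have ht0 : (0:ℝ) < t := lt_trans (inv_pos.2 hR) ht
            have : t⁻¹ < R := by
              rw [inv_lt_comm₀ ht0 hR]
              exact ht
            rw [min_eq_right this.le]
            congr 1
            rw [Real.rpow_neg ht0.le, Real.rpow_natCast, inv_pow]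
          rw [setLIntegral_congr_fun measurableSet_Ioi this,
            lintegral_mul_const _ (by fun_prop)]
          gcongr
          have hint : IntegrableOn (fun t : ℝ => t ^ (-(d:ℝ))) (Ioi R⁻¹) :=
            integrableOn_Ioi_rpow_of_lt (by push_cast; linarith) (inv_pos.2 hR)
          rw [← ofReal_integral_eq_lintegral_ofReal hint
            (ae_restrict_of_forall_mem measurableSet_Ioi fun t ht =>
              Real.rpow_nonneg (le_of_lt (lt_trans (inv_pos.2 hR) ht)) _)]
          rw [integral_Ioi_rpow_of_lt (by push_cast; linarith) (inv_pos.2 hR)]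
          apply le_of_eq
          congr 1
          have hcast : ((d:ℝ) - 1) = ((d - 1 : ℕ) : ℝ) := by
            push_cast [Nat.cast_sub hd.le]; ring
          have h1 : ((d:ℝ) - 1) ≠ 0 := hd1.ne'
          rw [Real.inv_rpow hR.le, ← Real.rpow_neg hR.le,
            show -(-(d:ℝ) + 1) = (d:ℝ) - 1 by ring, hcast, Real.rpow_natCast,
            show -(d:ℝ) + 1 = -((d:ℝ) - 1) by ring]
          rw [div_neg, neg_div, neg_neg, hcast]
    _ = ENNReal.ofReal ((d:ℝ) / ((d:ℝ) - 1) * R ^ (d - 1)) * V1 := by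
        rw [← add_mul, ← ENNReal.ofReal_add (by positivity) (by positivity)]
        congr 2
        field_simp
        ring

open Set in
/-- Auxiliary: bound on the measure of the `t`-section. -/
lemma sect_bound {d : ℕ} {R ε : ℝ} (hε : 0 ≤ ε)
    (w g z : EuclideanSpace ℝ (Fin d)) (hz : z ≠ 0) :
    volume {t : ℝ | ‖g - (⟪z, w⟫ - t) • z‖ ≤ ε ∧ ‖z‖ < R} ≤
      (Metric.ball (0 : EuclideanSpace ℝ (Fin d)) R).indicator
        (fun z => ENNReal.ofReal (2 * ε * ‖z‖⁻¹)) z := by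
  by_cases hzR : ‖z‖ < R
  · rw [Set.indicator_of_mem (by simpa [Metric.mem_ball, dist_zero_right] using hzR)]
    have hzn : 0 < ‖z‖ := norm_pos_iff.2 hz
    set m : ℝ := ⟪g, z⟫ / ‖z‖ ^ 2 with hm
    have hsub : {t : ℝ | ‖g - (⟪z, w⟫ - t) • z‖ ≤ ε ∧ ‖z‖ < R} ⊆
        Set.Icc (⟪z, w⟫ - m - ε / ‖z‖) (⟪z, w⟫ - m + ε / ‖z‖) := by
      rintro t ⟨ht, -⟩
      set u : ℝ := ⟪z, w⟫ - t with hu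
      have horth : ⟪g - m • z, ((m - u) • z : EuclideanSpace ℝ (Fin d))⟫ = 0 := by
        rw [real_inner_smul_right, inner_sub_left, real_inner_smul_left,
          real_inner_self_eq_norm_sq, hm]
        field_simp
        ring
      have hdecomp : g - u • z = (g - m • z) + (m - u) • z := by
        module
      have hpyth : ‖(m - u) • z‖ ≤ ‖g - u • z‖ := by
        have h2 : ‖g - u • z‖ ^ 2 = ‖g - m • z‖ ^ 2 + ‖(m - u) • z‖ ^ 2 := by
          rw [hdecomp, norm_add_sq_real, horth]; ring
        nlinarith [norm_nonneg (g - u • z), norm_nonneg (g - m • z),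
          norm_nonneg ((m - u) • z)]
      have habs : |m - u| * ‖z‖ ≤ ε := by
        have h := hpyth.trans ht
        rwa [norm_smul, Real.norm_eq_abs] at h
      have hfin : |m - u| ≤ ε / ‖z‖ := by
        rw [le_div_iff₀ hzn]; exact habs
      rw [abs_le] at hfin
      obtain ⟨h1, h2⟩ := hfin
      simp only [hu] at h1 h2
      constructor <;> [linarith; linarith]
    calc volume {t : ℝ | ‖g - (⟪z, w⟫ - t) • z‖ ≤ ε ∧ ‖z‖ < R}
        ≤ volume (Set.Icc (⟪z, w⟫ - m - ε / ‖z‖) (⟪z, w⟫ - m + ε / ‖z‖)) :=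
          measure_mono hsub
      _ = ENNReal.ofReal (2 * ε * ‖z‖⁻¹) := by
          rw [Real.volume_Icc]
          congr 1
          field_simp
          ring
  · have hempty : {t : ℝ | ‖g - (⟪z, w⟫ - t) • z‖ ≤ ε ∧ ‖z‖ < R} = ∅ := by
      ext t; simp [hzR]
    rw [hempty]
    simp

/-- Volume bound for the ε-forging set of linear regression: with `d > 1`, `R > 0`,
fixed `w` and reference point `(x,y)` with nonzero gradient, the ε-forging set
`S_ε = {(z,t) : ‖(xᵀw - y)x - (zᵀw - t)z‖ ≤ ε}` restricted to `‖z‖ < R` satisfies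
`μ(S_ε ∩ B_R) ≤ (2d/(d-1))·(vol(B_R)/R)·ε`. -/
theorem stmt8 {d : ℕ} (hd : 1 < d) (R ε : ℝ) (hR : 0 < R) (hε : 0 ≤ ε)
    (w x : EuclideanSpace ℝ (Fin d)) (y : ℝ)
    (hgrad : (⟪x, w⟫ - y) • x ≠ 0) :
    volume ({p : EuclideanSpace ℝ (Fin d) × ℝ |
        ‖(⟪x, w⟫ - y) • x - (⟪p.1, w⟫ - p.2) • p.1‖ ≤ ε} ∩
      {p : EuclideanSpace ℝ (Fin d) × ℝ | ‖p.1‖ < R}) ≤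
    ENNReal.ofReal ((2 * d / (d - 1)) *
      ((volume (Metric.ball (0 : EuclideanSpace ℝ (Fin d)) R)).toReal / R) * ε) := by
  haveI : Nonempty (Fin d) := ⟨⟨0, by omega⟩⟩
  have hd1 : (0:ℝ) < (d:ℝ) - 1 := by
    have h2 : (2:ℝ) ≤ d := by exact_mod_cast hd
    linarith
  set g : EuclideanSpace ℝ (Fin d) := (⟪x, w⟫ - y) • x with hgdef
  set A := {p : EuclideanSpace ℝ (Fin d) × ℝ | ‖g - (⟪p.1, w⟫ - p.2) • p.1‖ ≤ ε} with hA
  set B := {p : EuclideanSpace ℝ (Fin d) × ℝ | ‖p.1‖ < R} with hB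
  have hcont : Continuous fun p : EuclideanSpace ℝ (Fin d) × ℝ =>
      ‖g - (⟪p.1, w⟫ - p.2) • p.1‖ :=
    (continuous_const.sub (((continuous_fst.inner continuous_const).sub
      continuous_snd).smul continuous_fst)).norm
  have hAm : MeasurableSet A := measurableSet_le hcont.measurable measurable_const
  have hBm : MeasurableSet B :=
    measurableSet_lt continuous_fst.norm.measurable measurable_const
  set V1 := volume (Metric.ball (0 : EuclideanSpace ℝ (Fin d)) 1) with hV1
  have hpre : ∀ z : EuclideanSpace ℝ (Fin d), Prod.mk z ⁻¹' (A ∩ B) =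
      {t : ℝ | ‖g - (⟪z, w⟫ - t) • z‖ ≤ ε ∧ ‖z‖ < R} := fun z => rfl
  have hae : ∀ᵐ z : EuclideanSpace ℝ (Fin d), volume (Prod.mk z ⁻¹' (A ∩ B)) ≤
      (Metric.ball (0 : EuclideanSpace ℝ (Fin d)) R).indicator
        (fun z => ENNReal.ofReal (2 * ε * ‖z‖⁻¹)) z := by
    have h0 : volume ({(0 : EuclideanSpace ℝ (Fin d))} : Set (EuclideanSpace ℝ (Fin d))) = 0 :=
      measure_singleton 0
    filter_upwards [compl_mem_ae_iff.2 h0] with z hz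
    rw [hpre z]
    exact sect_bound hε w g z hz
  have hmain : volume (A ∩ B) ≤
      ENNReal.ofReal (2 * ε) * (ENNReal.ofReal ((d:ℝ) / ((d:ℝ) - 1) * R ^ (d - 1)) * V1) := by
    calc volume (A ∩ B) = ∫⁻ z, volume (Prod.mk z ⁻¹' (A ∩ B)) := by
          rw [Measure.volume_eq_prod, Measure.prod_apply (hAm.inter hBm)]
      _ ≤ ∫⁻ z, (Metric.ball (0 : EuclideanSpace ℝ (Fin d)) R).indicator
            (fun z => ENNReal.ofReal (2 * ε * ‖z‖⁻¹)) z := lintegral_mono_ae hae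
      _ = ∫⁻ z in Metric.ball (0 : EuclideanSpace ℝ (Fin d)) R,
            ENNReal.ofReal (2 * ε * ‖z‖⁻¹) := lintegral_indicator measurableSet_ball _
      _ = ENNReal.ofReal (2 * ε) *
            ∫⁻ z in Metric.ball (0 : EuclideanSpace ℝ (Fin d)) R, ENNReal.ofReal ‖z‖⁻¹ := by
          simp_rw [ENNReal.ofReal_mul (by positivity : (0:ℝ) ≤ 2 * ε)]
          rw [lintegral_const_mul _ (f := fun z : EuclideanSpace ℝ (Fin d) => ENNReal.ofReal ‖z‖⁻¹)
            (measurable_norm.inv.ennreal_ofReal)]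
      _ ≤ ENNReal.ofReal (2 * ε) *
            (ENNReal.ofReal ((d:ℝ) / ((d:ℝ) - 1) * R ^ (d - 1)) * V1) := by
          gcongr
          exact radial_bound hd hR
  refine hmain.trans (le_of_eq ?_)
  have hV1top : V1 ≠ ⊤ := measure_ball_lt_top.ne
  have hball : volume (Metric.ball (0 : EuclideanSpace ℝ (Fin d)) R)
      = ENNReal.ofReal (R ^ d) * V1 := by
    rw [Measure.addHaar_ball _ _ hR.le, finrank_euclideanSpace_fin]
  rw [hball, ENNReal.toReal_mul, ENNReal.toReal_ofReal (by positivity)]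
  rw [← ENNReal.ofReal_toReal hV1top, ← ENNReal.ofReal_mul (by positivity),
    ← ENNReal.ofReal_mul (by positivity)]
  congr 1
  have hpow : R ^ (d - 1) * R = R ^ d := pow_sub_one_mul (by omega) R
  rw [← hpow]
  field_simp
  ring
  rw [ENNReal.toReal_ofReal ENNReal.toReal_nonneg]
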